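/- Let k ≥ 2 and let d be a positive divisor of the positive integer n with d ≠ n and 2d ≠ n. Then x^n − 1 divides ∑_{m : d ∣ m ∣ n} μ(m/d) · (−1)^{k(n − n/m)} · x^{(k−2)(n/2)(n/m − 1)} in ℤ[x]. Consequently the polynomial a_{k;n,d}(x) = ((x^d − 1)/(x^n − 1)) · ∑_{m : d ∣ m ∣ n} μ(m/d) · (−1)^{k(n − n/m)} · x^{(k−2)(n/2)(n/m − 1)} is divisible by x^d − 1 in ℤ[x]. -/

import Mathlib

open Polynomial

/-- The polynomial `S_{k;n,d}(x) = ∑_{d ∣ m ∣ n} μ(m/d)·(−1)^{k(n − n/m)}·x^{(k−2)(n/2)(n/m − 1)}`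
in `ℤ[x]`.  (Since `n(n/m − 1)` is always even, the exponent is written
`((k−2)·(n·(n/m − 1)))/2`.) -/
noncomputable def sPoly (k n d : ℕ) : ℤ[X] :=
  ∑ m ∈ n.divisors.filter (fun m => d ∣ m),
    C ((ArithmeticFunction.moebius (m / d) : ℤ) * (-1) ^ (k * (n - n / m))) *
      X ^ ((k - 2) * (n * (n / m - 1)) / 2)

private lemma moebius_sum_zero {N : ℕ} (h : N ≠ 1) :
    ∑ e ∈ N.divisors, (ArithmeticFunction.moebius e : ℤ) = 0 := by
  have := ArithmeticFunction.coe_mul_zeta_apply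
    (f := (ArithmeticFunction.moebius : ArithmeticFunction ℤ)) (x := N)
  rw [ArithmeticFunction.moebius_mul_coe_zeta, ArithmeticFunction.one_apply_ne h] at this
  exact this.symm

private lemma xpow_sub_mod (n a : ℕ) : (X ^ n - 1 : ℤ[X]) ∣ X ^ a - X ^ (a % n) := by
  have h : (X ^ a - X ^ (a % n) : ℤ[X]) = ((X ^ n) ^ (a / n) - 1) * X ^ (a % n) := by
    rw [sub_mul, one_mul, ← pow_mul, ← pow_add, Nat.div_add_mod]
  rw [h]
  exact dvd_mul_of_dvd_left (by simpa using sub_dvd_pow_sub_pow ((X:ℤ[X]) ^ n) 1 (a / n)) _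

/-- normal form of each reduced term -/
private lemma term_eq (k n N e : ℕ) (hk : 2 ≤ k) (hn : 0 < n) (hNn : N ∣ n)
    (he : e ∈ N.divisors) :
    (C ((ArithmeticFunction.moebius e : ℤ) * (-1) ^ (k * (n - N / e))) *
        X ^ (((k - 2) * (n * (N / e - 1)) / 2) % n) : ℤ[X]) =
      if k % 2 = 1 ∧ (N / e) % 2 = 0 then
        C (ArithmeticFunction.moebius e : ℤ) * X ^ (n / 2)
      else C ((if k % 2 = 1 ∧ n % 2 = 0 then (-1 : ℤ) else 1) *
        (ArithmeticFunction.moebius e : ℤ)) := by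
  rw [Nat.mem_divisors] at he
  obtain ⟨heN, hN0⟩ := he
  set c := N / e with hc
  have hcN : c ∣ N := Nat.div_dvd_of_dvd heN
  have hcn : c ∣ n := hcN.trans hNn
  have hcpos : 0 < c := Nat.div_pos (Nat.le_of_dvd (Nat.pos_of_ne_zero hN0) heN)
    (Nat.pos_of_dvd_of_pos heN (Nat.pos_of_ne_zero hN0))
  have hcle : c ≤ n := Nat.le_of_dvd hn hcn
  rcases Nat.even_or_odd k with hke | hko
  · -- k even
    have hk2 : k % 2 = 0 := Nat.even_iff.mp hke
    obtain ⟨j, hj⟩ : ∃ j, k - 2 = 2 * j := ⟨(k - 2) / 2, by omega⟩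
    have hexp : (k - 2) * (n * (c - 1)) / 2 = n * (j * (c - 1)) := by
      have : (k - 2) * (n * (c - 1)) = 2 * (n * (j * (c - 1))) := by rw [hj]; ring
      rw [this, Nat.mul_div_cancel_left _ (by norm_num : 0 < 2)]
    have hsign : ((-1 : ℤ)) ^ (k * (n - c)) = 1 :=
      Even.neg_one_pow (by rcases hke with ⟨t, ht⟩; exact ⟨t * (n - c), by rw [ht]; ring⟩)
    rw [hexp, Nat.mul_mod_right, hsign, if_neg (by simp [hk2]), if_neg (by simp [hk2])]
    simp
  · -- k odd
    have hk1 : k % 2 = 1 := Nat.odd_iff.mp hko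
    rcases Nat.even_or_odd c with hce | hco
    · -- c even, forces n even
      have hc2 : c % 2 = 0 := Nat.even_iff.mp hce
      have hne : n % 2 = 0 := Nat.even_iff.mp ((even_iff_two_dvd.mpr
        ((even_iff_two_dvd.mp hce).trans hcn)))
      have hodd : Odd ((k - 2) * (c - 1)) := by
        refine Nat.odd_mul.mpr ⟨?_, ?_⟩
        · exact Nat.Odd.sub_even (by omega) hko (by exact ⟨1, rfl⟩)
        · exact Nat.Even.sub_odd (by omega) hce odd_one
      obtain ⟨t, ht⟩ := hodd
      obtain ⟨h, hn2⟩ : ∃ h, n = 2 * h := ⟨n / 2, by omega⟩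
      have hh : 0 < h := by omega
      have hexp : (k - 2) * (n * (c - 1)) / 2 % n = n / 2 := by
        have e1 : (k - 2) * (n * (c - 1)) = 2 * (h + t * n) := by
          calc (k - 2) * (n * (c - 1)) = h * ((k - 2) * (c - 1)) * 2 := by rw [hn2]; ring
            _ = h * (2 * t + 1) * 2 := by rw [ht]
            _ = 2 * (h + t * (2 * h)) := by ring
            _ = 2 * (h + t * n) := by rw [← hn2]
        rw [e1, Nat.mul_div_cancel_left _ (by norm_num : 0 < 2),
          Nat.add_mul_mod_self_right]
        have : n / 2 = h := by omega
        rw [this]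
        exact Nat.mod_eq_of_lt (by omega)
      have hsign : ((-1 : ℤ)) ^ (k * (n - c)) = 1 := by
        refine Even.neg_one_pow ?_
        refine (Nat.even_mul).mpr (Or.inr ?_)
        exact (Nat.even_sub hcle).mpr (iff_of_true (Nat.even_iff.mpr hne) hce)
      rw [hexp, hsign, if_pos ⟨hk1, hc2⟩, mul_one]
    · -- c odd
      have hc1 : c % 2 = 1 := Nat.odd_iff.mp hco
      obtain ⟨i, hi⟩ : ∃ i, c - 1 = 2 * i := ⟨(c - 1) / 2, by omega⟩
      have hexp : (k - 2) * (n * (c - 1)) / 2 = n * ((k - 2) * i) := by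
        have : (k - 2) * (n * (c - 1)) = 2 * (n * ((k - 2) * i)) := by rw [hi]; ring
        rw [this, Nat.mul_div_cancel_left _ (by norm_num : 0 < 2)]
      rw [hexp, Nat.mul_mod_right, if_neg (by simp [hc1]), pow_zero, mul_one]
      rcases Nat.even_or_odd n with hne | hno
      · -- n even : sign -1
        have hn2 : n % 2 = 0 := Nat.even_iff.mp hne
        have hsign : ((-1 : ℤ)) ^ (k * (n - c)) = -1 := by
          refine Odd.neg_one_pow ?_
          refine Nat.odd_mul.mpr ⟨hko, ?_⟩
          exact Nat.odd_iff.mpr (by omega)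
        rw [hsign, if_pos ⟨hk1, hn2⟩]
        ring_nf
      · -- n odd : sign 1
        have hn1 : n % 2 = 1 := Nat.odd_iff.mp hno
        have hsign : ((-1 : ℤ)) ^ (k * (n - c)) = 1 := by
          refine Even.neg_one_pow ?_
          exact (Nat.even_mul).mpr (Or.inr (Nat.even_iff.mpr (by omega)))
        rw [hsign, if_neg (by simp [hn1])]
        ring_nf

private lemma filter_even_quot (N : ℕ) (hN0 : N ≠ 0) (hNe : 2 ∣ N) :
    N.divisors.filter (fun e => (N / e) % 2 = 0) = (N / 2).divisors := by
  ext e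
  simp only [Finset.mem_filter, Nat.mem_divisors]
  constructor
  · rintro ⟨⟨heN, -⟩, hmod⟩
    refine ⟨?_, by omega⟩
    obtain ⟨s, hs⟩ : ∃ s, N / e = 2 * s := ⟨(N / e) / 2, by omega⟩
    have hNe2 : N = 2 * (e * s) := by
      calc N = e * (N / e) := (Nat.mul_div_cancel' heN).symm
        _ = e * (2 * s) := by rw [hs]
        _ = 2 * (e * s) := by ring
    exact ⟨s, by rw [hNe2, Nat.mul_div_cancel_left _ (by norm_num : 0 < 2)]⟩
  · rintro ⟨⟨s, hs⟩, -⟩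
    have hN22 : N = 2 * (N / 2) := by omega
    have hNes : N = e * (2 * s) := by rw [hN22, hs]; ring
    have hepos : 0 < e := by
      rcases Nat.eq_zero_or_pos e with h | h
      · exfalso; rw [h, zero_mul] at hNes; exact hN0 hNes
      · exact h
    have hNe' : N / e = 2 * s := by rw [hNes, Nat.mul_div_cancel_left _ hepos]
    exact ⟨⟨⟨2 * s, hNes⟩, hN0⟩, by omega⟩

theorem dvd_sPoly (k n d : ℕ) (hk : 2 ≤ k) (hn : 0 < n) (hd : 0 < d) (hdn : d ∣ n)
    (h1 : d ≠ n) (h2 : 2 * d ≠ n) : (X ^ n - 1 : ℤ[X]) ∣ sPoly k n d := by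
  obtain ⟨N, hnN⟩ := hdn
  have hNdef : n / d = N := by rw [hnN, Nat.mul_div_cancel_left _ hd]
  have hN0 : N ≠ 0 := by rintro rfl; rw [mul_zero] at hnN; omega
  have hN1 : N ≠ 1 := by rintro rfl; rw [mul_one] at hnN; exact h1 hnN.symm
  have hN2 : 2 ≤ N := by omega
  have hNn : N ∣ n := ⟨d, by rw [hnN]; ring⟩
  have hNne2 : N ≠ 2 := by rintro rfl; exact h2 (by omega)
  -- reindex
  have hre : sPoly k n d = ∑ e ∈ N.divisors,
      C ((ArithmeticFunction.moebius e : ℤ) * (-1) ^ (k * (n - N / e))) *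
        X ^ ((k - 2) * (n * (N / e - 1)) / 2) := by
    unfold sPoly
    refine Finset.sum_nbij' (fun m => m / d) (fun e => d * e) ?_ ?_ ?_ ?_ ?_
    · intro m hm
      simp only [Finset.mem_filter, Nat.mem_divisors] at hm
      obtain ⟨⟨hmn, -⟩, e, rfl⟩ := hm
      simp only [Nat.mul_div_cancel_left e hd, Nat.mem_divisors]
      refine ⟨?_, hN0⟩
      rw [hnN] at hmn
      exact (mul_dvd_mul_iff_left (by omega : d ≠ 0)).mp hmn
    · intro e he
      rw [Nat.mem_divisors] at he
      simp only [Finset.mem_filter, Nat.mem_divisors]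
      exact ⟨⟨by rw [hnN]; exact mul_dvd_mul_left d he.1, by omega⟩, Dvd.intro e rfl⟩
    · intro m hm
      simp only [Finset.mem_filter] at hm
      exact Nat.mul_div_cancel' hm.2
    · intro e _
      exact Nat.mul_div_cancel_left e hd
    · intro m hm
      simp only [Finset.mem_filter, Nat.mem_divisors] at hm
      obtain ⟨⟨hmn, -⟩, e, rfl⟩ := hm.imp id id
      have hq : n / (d * e) = N / e := by rw [← Nat.div_div_eq_div_mul, hNdef]
      simp only [Nat.mul_div_cancel_left e hd, hq]
  rw [hre]
  -- remainder polynomial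
  set R : ℤ[X] := ∑ e ∈ N.divisors,
      C ((ArithmeticFunction.moebius e : ℤ) * (-1) ^ (k * (n - N / e))) *
        X ^ (((k - 2) * (n * (N / e - 1)) / 2) % n) with hR
  have hdvd_diff : (X ^ n - 1 : ℤ[X]) ∣
      (∑ e ∈ N.divisors,
        C ((ArithmeticFunction.moebius e : ℤ) * (-1) ^ (k * (n - N / e))) *
          X ^ ((k - 2) * (n * (N / e - 1)) / 2)) - R := by
    rw [hR, ← Finset.sum_sub_distrib]
    refine Finset.dvd_sum fun e he => ?_
    rw [← mul_sub]
    exact Dvd.dvd.mul_left (xpow_sub_mod n _) _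
  have hR0 : R = 0 := by
    rw [hR]
    have hterm : ∀ e ∈ N.divisors,
        (C ((ArithmeticFunction.moebius e : ℤ) * (-1) ^ (k * (n - N / e))) *
          X ^ (((k - 2) * (n * (N / e - 1)) / 2) % n) : ℤ[X]) =
        if k % 2 = 1 ∧ (N / e) % 2 = 0 then
          C (ArithmeticFunction.moebius e : ℤ) * X ^ (n / 2)
        else C ((if k % 2 = 1 ∧ n % 2 = 0 then (-1 : ℤ) else 1) *
          (ArithmeticFunction.moebius e : ℤ)) :=
      fun e he => term_eq k n N e hk hn hNn he
    rw [Finset.sum_congr rfl hterm, Finset.sum_ite]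
    have hsum0 : ∑ e ∈ N.divisors, (ArithmeticFunction.moebius e : ℤ) = 0 :=
      moebius_sum_zero hN1
    have hfilter0 : ∑ e ∈ N.divisors.filter (fun e => k % 2 = 1 ∧ (N / e) % 2 = 0),
        (ArithmeticFunction.moebius e : ℤ) = 0 := by
      rcases Nat.eq_zero_or_pos (k % 2) with hk2 | hk2'
      · rw [Finset.filter_false_of_mem (fun e _ => by simp [hk2]), Finset.sum_empty]
      · have hk1 : k % 2 = 1 := by omega
        rcases Nat.even_or_odd N with hNe | hNo
        · have hNmod : N % 2 = 0 := Nat.even_iff.mp hNe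
          have heq : N.divisors.filter (fun e => k % 2 = 1 ∧ (N / e) % 2 = 0) =
              N.divisors.filter (fun e => (N / e) % 2 = 0) := by
            apply Finset.filter_congr; intro e _; simp [hk1]
          rw [heq, filter_even_quot N hN0 (by omega)]
          exact moebius_sum_zero (by omega)
        · rw [Finset.filter_false_of_mem, Finset.sum_empty]
          intro e he
          rw [Nat.mem_divisors] at he
          have hdvd : (N / e) ∣ N := Nat.div_dvd_of_dvd he.1
          have hNodd : N % 2 = 1 := Nat.odd_iff.mp hNo
          simp only [hk1, true_and]
          intro hcon
          obtain ⟨s, hs⟩ : ∃ s, N / e = 2 * s := ⟨(N / e) / 2, by omega⟩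
          obtain ⟨u, hu⟩ := hdvd
          rw [hs] at hu
          have hu2 : N = 2 * (s * u) := by rw [hu]; ring
          omega
    have hfilterc0 : ∑ e ∈ N.divisors.filter (fun e => ¬(k % 2 = 1 ∧ (N / e) % 2 = 0)),
        (ArithmeticFunction.moebius e : ℤ) = 0 := by
      have hsplit := Finset.sum_filter_add_sum_filter_not N.divisors
        (fun e => k % 2 = 1 ∧ (N / e) % 2 = 0)
        (fun e => (ArithmeticFunction.moebius e : ℤ))
      rw [hfilter0, zero_add] at hsplit
      rw [hsplit, hsum0]
    have e1 : ∑ e ∈ N.divisors.filter (fun e => k % 2 = 1 ∧ (N / e) % 2 = 0),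
        (C (ArithmeticFunction.moebius e : ℤ) * X ^ (n / 2) : ℤ[X]) =
        C (∑ e ∈ N.divisors.filter (fun e => k % 2 = 1 ∧ (N / e) % 2 = 0),
          (ArithmeticFunction.moebius e : ℤ)) * X ^ (n / 2) := by
      rw [map_sum, Finset.sum_mul]
    have e2 : ∑ e ∈ N.divisors.filter (fun e => ¬(k % 2 = 1 ∧ (N / e) % 2 = 0)),
        (C ((if k % 2 = 1 ∧ n % 2 = 0 then (-1 : ℤ) else 1) *
          (ArithmeticFunction.moebius e : ℤ)) : ℤ[X]) =
        C ((if k % 2 = 1 ∧ n % 2 = 0 then (-1 : ℤ) else 1) *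
          ∑ e ∈ N.divisors.filter (fun e => ¬(k % 2 = 1 ∧ (N / e) % 2 = 0)),
            (ArithmeticFunction.moebius e : ℤ)) := by
      rw [Finset.mul_sum, map_sum]
    rw [e1, e2, hfilter0, hfilterc0, map_zero, zero_mul, mul_zero, map_zero, add_zero]
  have hfin := hdvd_diff
  rw [hR0, sub_zero] at hfin
  exact hfin

/-- Lemma `lemand` (I), divisibility claim: for `k ≥ 2`, `d ∣ n` with `d ≠ n` and `2d ≠ n`,
`x^n − 1` divides `S_{k;n,d}(x)` in `ℤ[x]`; consequently the polynomial
`a_{k;n,d}(x) = ((x^d − 1)/(x^n − 1))·S_{k;n,d}(x)` is divisible by `x^d − 1` in `ℤ[x]`. -/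
theorem stmt_4 (k n d : ℕ) (hk : 2 ≤ k) (hn : 0 < n) (hd : 0 < d) (hdn : d ∣ n)
    (h1 : d ≠ n) (h2 : 2 * d ≠ n) :
    ((X ^ n - 1 : ℤ[X]) ∣ sPoly k n d) ∧
      ∀ a : ℤ[X], (X ^ n - 1) * a = (X ^ d - 1) * sPoly k n d → (X ^ d - 1) ∣ a := by
  have hdvd := dvd_sPoly k n d hk hn hd hdn h1 h2
  refine ⟨hdvd, fun a ha => ?_⟩
  obtain ⟨q, hq⟩ := hdvd
  have hne : (X ^ n - 1 : ℤ[X]) ≠ 0 := by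
    have := X_pow_sub_C_ne_zero hn (1 : ℤ)
    simpa using this
  have : (X ^ n - 1 : ℤ[X]) * a = (X ^ n - 1) * ((X ^ d - 1) * q) := by
    rw [ha, hq]; ring
  have := mul_left_cancel₀ hne this
  exact ⟨q, this⟩
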